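/- arXiv:2601.06625 — 3 statements merged into one kernel-verified Lean document; each statement's English description precedes it below -/
import Mathlib

section
/- Let n ∈ ℕ₀ and p ≥ n. Then the L² norm of the n-th primitive of the Legendre polynomial L_p satisfies ‖ψ_{p,n}‖₀² = (2^{n+1}/n!) · (1/(2p+1)) · ∏_{k=1}^{n} (2k−1)/((2p+1)² − 4k²). -/
open MeasureTheory Polynomial

noncomputable section

/-- The Legendre polynomial of degree `n`, via Rodrigues' formula. -/
def leg (n : ℕ) : Polynomial ℝ :=
  ((1 : ℝ) / (2 ^ n * n.factorial)) • derivative^[n] ((X ^ 2 - 1) ^ n)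

/-- The closed interval `Ω̄ = [-1, 1]`. -/
def Iom : Set ℝ := Set.Icc (-1 : ℝ) 1

/-- Squared `L²(Ω)` norm. -/
def nsq (f : ℝ → ℝ) : ℝ := ∫ x in Iom, f x ^ 2

/-- The `L²(Ω)` inner product. -/
def ip (f g : ℝ → ℝ) : ℝ := ∫ x in Iom, f x * g x

/-- Membership in the Sobolev space `H^k(Ω)` (strong form). -/
def MemH (k : ℕ) (w : ℝ → ℝ) : Prop := ContDiffOn ℝ k w Iom

/-- The squared Sobolev seminorm `|w|_k² = ‖w^{(k)}‖₀²`. -/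
def semSq (k : ℕ) (w : ℝ → ℝ) : ℝ := nsq (iteratedDerivWithin k w Iom)

/-- `P` coincides with a polynomial of degree `≤ p`. -/
def IsPolyDeg (p : ℕ) (P : ℝ → ℝ) : Prop :=
  ∃ q : Polynomial ℝ, q.natDegree ≤ p ∧ ∀ x, P x = q.eval x

/-- `P = π_p w` is the `L²(Ω)` projection of `w` onto polynomials of degree `≤ p`. -/
def IsL2Proj (p : ℕ) (w P : ℝ → ℝ) : Prop :=
  IsPolyDeg p P ∧
    ∀ v : Polynomial ℝ, v.natDegree ≤ p → ∫ x in Iom, (P x - w x) * v.eval x = 0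

/-- `ψ_{i,n}`: the `n`-th primitive of the Legendre polynomial `L_i`. -/
def psi (i : ℕ) : ℕ → ℝ → ℝ
  | 0 => fun x => (leg i).eval x
  | n + 1 => fun x => ∫ t in (-1 : ℝ)..x, psi i n t

/-- `f ∈ Λ_i^j = span{L_i, …, L_j}`. -/
def inLegSpan (i j : ℕ) (f : ℝ → ℝ) : Prop :=
  ∃ c : ℕ → ℝ, ∀ x, f x = ∑ m ∈ Finset.Icc i j, c m * (leg m).eval x

/-- The defining properties of `q_{p,ν}`. -/
def IsQ (p ν : ℕ) (q : ℝ → ℝ) : Prop :=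
  inLegSpan (p - ν) (p + ν + 1) q ∧ q 1 = 1 ∧ q (-1) = 0 ∧
    ∀ i, 1 ≤ i → i ≤ ν → iteratedDeriv i q 1 = 0 ∧ iteratedDeriv i q (-1) = 0

/-- Recursive construction of `q_{p,ν}`. -/
def qrec (p : ℕ) : ℕ → ℝ → ℝ
  | 0 => fun x => ((leg p).eval x + (leg (p + 1)).eval x) / 2
  | ν + 1 => fun x =>
      qrec p ν x
        + (-(iteratedDeriv (ν + 1) (qrec p ν) 1
              + (-1 : ℝ) ^ p * iteratedDeriv (ν + 1) (qrec p ν) (-1)) / 2) * psi p (ν + 1) x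
        + (-(iteratedDeriv (ν + 1) (qrec p ν) 1
              - (-1 : ℝ) ^ p * iteratedDeriv (ν + 1) (qrec p ν) (-1)) / 2) * psi (p + 1) (ν + 1) x

/-- The coefficient `α_{p,ν}` of the recursive construction. -/
def alphaC (p ν : ℕ) : ℝ :=
  -(iteratedDeriv ν (qrec p (ν - 1)) 1 + (-1 : ℝ) ^ p * iteratedDeriv ν (qrec p (ν - 1)) (-1)) / 2

/-- The coefficient `β_{p,ν}` of the recursive construction. -/
def betaC (p ν : ℕ) : ℝ :=
  -(iteratedDeriv ν (qrec p (ν - 1)) 1 - (-1 : ℝ) ^ p * iteratedDeriv ν (qrec p (ν - 1)) (-1)) / 2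

end

noncomputable section AuxL2

namespace L2X

def W (p : ℕ) : Polynomial ℝ := ((X : Polynomial ℝ) ^ 2 - 1) ^ p
def Fp (p m : ℕ) : Polynomial ℝ := derivative^[m] (W p)
lemma Fp_succ (p m : ℕ) : Fp p (m + 1) = derivative (Fp p m) := by
  simp [Fp, Function.iterate_succ_apply']

lemma integral_derivative (U : Polynomial ℝ) :
    ∫ x in (-1:ℝ)..1, (derivative U).eval x = U.eval 1 - U.eval (-1) := by
  refine intervalIntegral.integral_eq_sub_of_hasDerivAt (fun x _ => U.hasDerivAt x) ?_
  exact (Polynomial.continuous _).intervalIntegrable _ _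

lemma Fp_dvd (p : ℕ) : ∀ k, k ≤ p →
    ∃ S : Polynomial ℝ, Fp p k = ((X : Polynomial ℝ) ^ 2 - 1) ^ (p - k) * S := by
  intro k
  induction k with
  | zero => intro _; exact ⟨1, by simp [Fp, W]⟩
  | succ k ih =>
    intro hk
    obtain ⟨S, hS⟩ := ih (le_of_lt hk)
    set j := p - (k+1) with hj
    have hpk : p - k = j + 1 := by omega
    refine ⟨C (((j:ℝ) + 1)) * (2 * X) * S + ((X : Polynomial ℝ)^2 - 1) * derivative S, ?_⟩
    rw [Fp_succ, hS, hpk, derivative_mul, derivative_pow]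
    have h2 : derivative ((X:Polynomial ℝ)^2 - 1) = 2 * X := by
      simp [derivative_X_pow]; exact one_add_one_eq_two
    rw [h2]
    push_cast
    ring

lemma deriv_sq_sub_one : derivative ((X:Polynomial ℝ)^2 - 1) = 2 * X := by
  simp [derivative_X_pow]
  exact one_add_one_eq_two

lemma Fp_eval_one (p k : ℕ) (hk : k < p) : (Fp p k).eval 1 = 0 := by
  obtain ⟨S, hS⟩ := Fp_dvd p k (le_of_lt hk)
  have h1 : p - k ≠ 0 := by omega
  simp [hS, h1, zero_pow]

lemma Fp_eval_neg_one (p k : ℕ) (hk : k < p) : (Fp p k).eval (-1) = 0 := by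
  obtain ⟨S, hS⟩ := Fp_dvd p k (le_of_lt hk)
  have h1 : p - k ≠ 0 := by omega
  simp [hS, h1, zero_pow]

lemma ode0 (p : ℕ) :
    ((X : Polynomial ℝ) ^ 2 - 1) * Fp p 1 = (2 * (p : Polynomial ℝ)) * (X * Fp p 0) := by
  have h : Fp p 1 = derivative (W p) := by rw [show (1:ℕ) = 0 + 1 from rfl, Fp_succ]; rfl
  rw [h]
  cases p with
  | zero => simp [W]
  | succ q =>
    rw [W, derivative_pow, deriv_sq_sub_one]
    have h0 : Fp (q+1) 0 = ((X:Polynomial ℝ)^2-1)^(q+1) := rfl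
    rw [h0, Polynomial.C_eq_natCast, pow_succ]
    push_cast
    ring

lemma ode (p : ℕ) : ∀ m,
    ((X : Polynomial ℝ) ^ 2 - 1) * Fp p (m + 2) =
      (2 * ((p : Polynomial ℝ) - ((m : Polynomial ℝ) + 1))) * (X * Fp p (m + 1))
        + (((m : Polynomial ℝ) + 1) * (2 * (p : Polynomial ℝ) - (m : Polynomial ℝ))) * Fp p m := by
  intro m
  induction m with
  | zero =>
    have h := congrArg derivative (ode0 p)
    simp only [derivative_mul, derivative_sub, derivative_one, derivative_X, derivative_X_pow,
      derivative_natCast, derivative_ofNat, ← Fp_succ, Polynomial.C_eq_natCast] at h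
    push_cast at h ⊢
    linear_combination h
  | succ m ih =>
    have h := congrArg derivative ih
    simp only [derivative_mul, derivative_add, derivative_sub, derivative_one, derivative_X,
      derivative_X_pow, derivative_natCast, derivative_ofNat, ← Fp_succ,
      Polynomial.C_eq_natCast] at h
    push_cast at h ⊢
    linear_combination h

/-- Abbreviations for the recursion coefficients (as real polynomials in casts). -/
noncomputable def Ac (p k : ℕ) : Polynomial ℝ := 2 * ((p:Polynomial ℝ) - ((k:Polynomial ℝ) + 1))
noncomputable def Bc (p k : ℕ) : Polynomial ℝ := ((k:Polynomial ℝ) + 1) * (2 * (p:Polynomial ℝ) - (k:Polynomial ℝ))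

noncomputable def Gp (p k : ℕ) : Polynomial ℝ :=
  (2 * (-(3 + 2 * Ac p k))) * (((X:Polynomial ℝ)^2 - 1) * Fp p k * Fp p (k+1))
    + ((3 + 2 * Ac p k) * (2 + Ac p k) - 2 * Bc p k) * (X * (Fp p k)^2)
    + 2 * (X * ((X:Polynomial ℝ)^2 - 1) * (Fp p (k+1))^2)

lemma key (p k : ℕ) :
    derivative (Gp p k) =
      (2 * (-(3 + 2 * Ac p k)) * Bc p k
          + ((3 + 2 * Ac p k) * (2 + Ac p k) - 2 * Bc p k)) * (Fp p k)^2
        + (4 + 4 * Ac p k) * (Fp p (k+1))^2 := by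
  rw [Gp]
  have hode := ode p k
  rw [show (2 * ((p : Polynomial ℝ) - ((k : Polynomial ℝ) + 1))) = Ac p k from rfl,
    show (((k : Polynomial ℝ) + 1) * (2 * (p : Polynomial ℝ) - (k : Polynomial ℝ))) = Bc p k from rfl] at hode
  have hA : derivative (Ac p k) = 0 := by
    simp [Ac, derivative_natCast]
  have hB : derivative (Bc p k) = 0 := by
    simp [Bc, derivative_natCast]
  simp only [derivative_mul, derivative_add, derivative_sub, derivative_neg, derivative_zero,
    derivative_one, derivative_X, derivative_X_pow, derivative_natCast, derivative_ofNat,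
    derivative_pow, ← Fp_succ, hA, hB, Polynomial.C_eq_natCast,
    show k+1+1 = k+2 from rfl]
  push_cast
  linear_combination (2 * (-(3 + 2 * Ac p k)) * Fp p k + 4 * X * Fp p (k+1)) * hode


noncomputable def Ar (p k : ℕ) : ℝ := 2 * ((p:ℝ) - ((k:ℝ) + 1))
noncomputable def Br (p k : ℕ) : ℝ := ((k:ℝ) + 1) * (2 * (p:ℝ) - (k:ℝ))

/-- The squared L² norm of the m-th derivative of `(X²-1)^p`. -/
noncomputable def Jint (p m : ℕ) : ℝ := ∫ x in (-1:ℝ)..1, ((Fp p m).eval x)^2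

lemma eval_Ac (p k : ℕ) (x : ℝ) : (Ac p k).eval x = Ar p k := by
  simp [Ac, Ar]
lemma eval_Bc (p k : ℕ) (x : ℝ) : (Bc p k).eval x = Br p k := by
  simp [Bc, Br]

lemma Jrec (p k : ℕ) (hk : k < p) :
    (2 * (-(3 + 2 * Ar p k)) * Br p k + ((3 + 2 * Ar p k) * (2 + Ar p k) - 2 * Br p k)) * Jint p k
      + (4 + 4 * Ar p k) * Jint p (k + 1) = 0 := by
  have hint1 : IntervalIntegrable (fun x => ((Fp p k).eval x)^2) MeasureTheory.volume (-1:ℝ) 1 :=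
    ((Fp p k).continuous.pow 2).intervalIntegrable _ _
  have hint2 : IntervalIntegrable (fun x => ((Fp p (k+1)).eval x)^2) MeasureTheory.volume (-1:ℝ) 1 :=
    ((Fp p (k+1)).continuous.pow 2).intervalIntegrable _ _
  have h1 : ∫ x in (-1:ℝ)..1, (derivative (Gp p k)).eval x = 0 := by
    rw [integral_derivative, Gp]
    simp [Fp_eval_one p k hk, Fp_eval_neg_one p k hk]
  have h2 : ∀ x : ℝ, (derivative (Gp p k)).eval x =
      (2 * (-(3 + 2 * Ar p k)) * Br p k + ((3 + 2 * Ar p k) * (2 + Ar p k) - 2 * Br p k))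
          * ((Fp p k).eval x)^2
        + (4 + 4 * Ar p k) * ((Fp p (k+1)).eval x)^2 := by
    intro x
    rw [key p k]
    simp [eval_Ac, eval_Bc]
  calc (2 * (-(3 + 2 * Ar p k)) * Br p k + ((3 + 2 * Ar p k) * (2 + Ar p k) - 2 * Br p k))
          * Jint p k + (4 + 4 * Ar p k) * Jint p (k + 1)
      = ∫ x in (-1:ℝ)..1,
          ((2 * (-(3 + 2 * Ar p k)) * Br p k + ((3 + 2 * Ar p k) * (2 + Ar p k) - 2 * Br p k))
            * ((Fp p k).eval x)^2 + (4 + 4 * Ar p k) * ((Fp p (k+1)).eval x)^2) := by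
        rw [intervalIntegral.integral_add (hint1.const_mul _) (hint2.const_mul _),
          intervalIntegral.integral_const_mul, intervalIntegral.integral_const_mul]
        rfl
    _ = ∫ x in (-1:ℝ)..1, (derivative (Gp p k)).eval x := by
        apply intervalIntegral.integral_congr
        intro x _
        exact (h2 x).symm
    _ = 0 := h1

lemma Hd (q : ℕ) : derivative ((X:Polynomial ℝ) * (1 - X^2)^(q+1)) =
    (2*(q:Polynomial ℝ)+3) * (1-X^2)^(q+1) - (2*(q:Polynomial ℝ)+2) * (1-X^2)^q := by
  simp only [derivative_mul, derivative_pow, derivative_X, derivative_sub, derivative_one,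
    derivative_X_pow, Polynomial.C_eq_natCast]
  push_cast
  rw [pow_succ]
  ring_nf

lemma Ip (p : ℕ) : ∫ x in (-1:ℝ)..1, (1-x^2)^p
    = 2^(2*p+1) * ((p.factorial : ℝ))^2 / ((2*p+1).factorial : ℝ) := by
  induction p with
  | zero => simp; norm_num
  | succ q ih =>
    have hint : ∀ r : ℕ, IntervalIntegrable (fun x : ℝ => (1-x^2)^r) MeasureTheory.volume (-1:ℝ) 1 := by
      intro r
      exact (((continuous_const.sub (continuous_id.pow 2)).pow r)).intervalIntegrable _ _
    have h0 : ∫ x in (-1:ℝ)..1, (derivative ((X:Polynomial ℝ) * (1 - X^2)^(q+1))).eval x = 0 := by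
      rw [integral_derivative]
      simp
    rw [Hd] at h0
    have h1 : ∀ x : ℝ, ((2*(q:Polynomial ℝ)+3) * (1-X^2)^(q+1) - (2*(q:Polynomial ℝ)+2) * (1-X^2)^q).eval x
        = (2*(q:ℝ)+3) * (1-x^2)^(q+1) - (2*(q:ℝ)+2) * (1-x^2)^q := by
      intro x; simp
    rw [intervalIntegral.integral_congr (fun x _ => h1 x)] at h0
    rw [intervalIntegral.integral_sub ((hint (q+1)).const_mul _) ((hint q).const_mul _),
      intervalIntegral.integral_const_mul, intervalIntegral.integral_const_mul, ih, sub_eq_zero] at h0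
    have h3 : (2*(q:ℝ)+3) ≠ 0 := by positivity
    have e1 : ((2*(q+1)+1).factorial : ℝ) = (2*(q:ℝ)+3) * (2*(q:ℝ)+2) * ((2*q+1).factorial : ℝ) := by
      rw [show 2*(q+1)+1 = (2*q+2)+1 from by ring, Nat.factorial_succ, show 2*q+2 = (2*q+1)+1 from rfl,
        Nat.factorial_succ]
      push_cast; ring
    have e2 : (((q+1).factorial : ℝ)) = ((q:ℝ)+1) * (q.factorial : ℝ) := by
      rw [Nat.factorial_succ]; push_cast; ring
    have hf1 : ((2*q+1).factorial : ℝ) ≠ 0 := Nat.cast_ne_zero.mpr (Nat.factorial_ne_zero _)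
    have hf2 : ((2*(q+1)+1).factorial : ℝ) ≠ 0 := Nat.cast_ne_zero.mpr (Nat.factorial_ne_zero _)
    rw [eq_div_iff hf2, e1, e2]
    field_simp at h0
    linear_combination (2*(q:ℝ)+2) * h0

lemma W_monic (p : ℕ) : (W p).Monic := by
  apply Polynomial.Monic.pow
  have h : ((X:Polynomial ℝ)^2-1) = X^2 - C 1 := by simp
  rw [h]
  exact monic_X_pow_sub_C _ (by norm_num)

lemma W_natDegree (p : ℕ) : (W p).natDegree = 2*p := by
  rw [W, natDegree_pow]
  have h : ((X:Polynomial ℝ)^2-1) = X^2 - C 1 := by simp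
  rw [h, natDegree_X_pow_sub_C]
  ring

lemma Fp_top (p : ℕ) : Fp p (2*p) = C (((2*p).factorial : ℝ)) := by
  have hdeg : (Fp p (2*p)).natDegree ≤ 0 := by
    have := Polynomial.natDegree_iterate_derivative (W p) (2*p)
    rw [W_natDegree] at this
    simpa [Fp] using this
  have := Polynomial.eq_C_of_natDegree_le_zero hdeg
  rw [this]
  congr 1
  rw [Fp, Polynomial.coeff_iterate_derivative, zero_add, Nat.descFactorial_self]
  have hc : (W p).coeff (2*p) = 1 := by
    have := (W_monic p).coeff_natDegree
    rwa [W_natDegree] at this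
  rw [hc]
  simp

lemma ibp (U V : Polynomial ℝ) (hb1 : U.eval 1 * V.eval 1 = 0) (hb2 : U.eval (-1) * V.eval (-1) = 0) :
    ∫ x in (-1:ℝ)..1, (derivative U).eval x * V.eval x
      = - ∫ x in (-1:ℝ)..1, U.eval x * (derivative V).eval x := by
  have h := integral_derivative (U * V)
  rw [derivative_mul] at h
  have h2 : ∀ x : ℝ, (derivative U * V + U * derivative V).eval x
      = (derivative U).eval x * V.eval x + U.eval x * (derivative V).eval x := by
    intro x; simp
  rw [intervalIntegral.integral_congr (fun x _ => h2 x)] at h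
  have hi1 : IntervalIntegrable (fun x : ℝ => (derivative U).eval x * V.eval x) MeasureTheory.volume (-1:ℝ) 1 :=
    ((derivative U).continuous.mul V.continuous).intervalIntegrable _ _
  have hi2 : IntervalIntegrable (fun x : ℝ => U.eval x * (derivative V).eval x) MeasureTheory.volume (-1:ℝ) 1 :=
    (U.continuous.mul (derivative V).continuous).intervalIntegrable _ _
  rw [intervalIntegral.integral_add hi1 hi2] at h
  simp only [eval_mul] at h
  rw [hb1, hb2] at h
  linarith

lemma pair (p : ℕ) : ∀ j, j ≤ p → Jint p p
    = (-1:ℝ)^j * ∫ x in (-1:ℝ)..1, (Fp p (p-j)).eval x * (Fp p (p+j)).eval x := by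
  intro j
  induction j with
  | zero =>
    intro _
    simp only [Nat.sub_zero, Nat.add_zero, pow_zero, one_mul, Jint]
    congr 1
    funext x
    ring
  | succ j ih =>
    intro hj
    have hjp : j ≤ p := by omega
    rw [ih hjp]
    have hsub : p - j = (p - (j+1)) + 1 := by omega
    have hder : Fp p (p-j) = derivative (Fp p (p-(j+1))) := by rw [hsub, Fp_succ]
    have hb1 : (Fp p (p-(j+1))).eval 1 * (Fp p (p+j)).eval 1 = 0 := by
      rw [Fp_eval_one p _ (by omega)]; ring
    have hb2 : (Fp p (p-(j+1))).eval (-1) * (Fp p (p+j)).eval (-1) = 0 := by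
      rw [Fp_eval_neg_one p _ (by omega)]; ring
    rw [hder, ibp _ _ hb1 hb2, ← Fp_succ, show p + j + 1 = p + (j+1) from by omega]
    ring

lemma Jpp (p : ℕ) : Jint p p
    = ((2*p).factorial : ℝ) * 2^(2*p+1) * ((p.factorial : ℝ))^2 / ((2*p+1).factorial : ℝ) := by
  have h := pair p p le_rfl
  rw [Nat.sub_self, show p + p = 2*p from by ring, Fp_top] at h
  have h2 : ∀ x : ℝ, (Fp p 0).eval x * (C (((2*p).factorial : ℝ))).eval x
      = ((2*p).factorial : ℝ) * ((-1:ℝ)^p * (1-x^2)^p) := by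
    intro x
    have : (Fp p 0).eval x = (x^2-1)^p := by simp [Fp, W]
    rw [this, eval_C]
    rw [show (x^2-1)^p = ((-1)*(1-x^2))^p from by ring_nf, mul_pow]
    ring
  rw [intervalIntegral.integral_congr (fun x _ => h2 x)] at h
  rw [intervalIntegral.integral_const_mul, intervalIntegral.integral_const_mul, Ip] at h
  rw [h]
  ring_nf
  rw [show ((-1:ℝ))^(p*2) = 1 from by rw [mul_comm, pow_mul]; norm_num]
  ring

lemma psi_eq (p : ℕ) : ∀ n, n ≤ p → ∀ x : ℝ,
    psi p n x = (1 / (2^p * (p.factorial : ℝ))) * (Fp p (p-n)).eval x := by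
  intro n
  induction n with
  | zero =>
    intro _ x
    simp only [psi, Nat.sub_zero, leg, Fp, W]
    rw [Polynomial.eval_smul, smul_eq_mul]
  | succ n ih =>
    intro hn x
    have hn' : n ≤ p := by omega
    have hsub : p - n = (p - (n+1)) + 1 := by omega
    have hunf : psi p (n+1) x = ∫ t in (-1:ℝ)..x, psi p n t := rfl
    rw [hunf, intervalIntegral.integral_congr (fun t _ => ih hn' t)]
    rw [intervalIntegral.integral_const_mul]
    have hftc : ∫ t in (-1:ℝ)..x, (Fp p (p-n)).eval t
        = (Fp p (p-(n+1))).eval x - (Fp p (p-(n+1))).eval (-1) := by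
      rw [hsub, Fp_succ]
      refine intervalIntegral.integral_eq_sub_of_hasDerivAt
        (fun t _ => (Fp p (p-(n+1))).hasDerivAt t) ?_
      exact (Polynomial.continuous _).intervalIntegrable _ _
    rw [hftc, Fp_eval_neg_one p _ (by omega), sub_zero]

lemma nsq_eq (p n : ℕ) (hnp : n ≤ p) :
    nsq (psi p n) = (1 / (2^p * (p.factorial : ℝ)))^2 * Jint p (p-n) := by
  unfold nsq Iom
  rw [MeasureTheory.integral_Icc_eq_integral_Ioc,
    ← intervalIntegral.integral_of_le (by norm_num : (-1:ℝ) ≤ 1)]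
  have h : ∀ x : ℝ, (psi p n x)^2
      = (1 / (2^p * (p.factorial : ℝ)))^2 * ((Fp p (p-n)).eval x)^2 := by
    intro x
    rw [psi_eq p n hnp x]
    ring
  rw [intervalIntegral.integral_congr (fun x _ => h x),
    intervalIntegral.integral_const_mul]
  rfl

lemma Jval (p : ℕ) : ∀ n, n ≤ p →
    Jint p (p-n) = (2^p * (p.factorial : ℝ))^2 *
      (2 ^ (n + 1) / (n.factorial : ℝ) * (1 / (2 * (p : ℝ) + 1)) *
        ∏ k ∈ Finset.Icc 1 n,
          (2 * (k : ℝ) - 1) / ((2 * (p : ℝ) + 1) ^ 2 - 4 * (k : ℝ) ^ 2)) := by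
  intro n
  induction n with
  | zero =>
    intro _
    rw [Nat.sub_zero, Jpp]
    have e1 : ((2*p+1).factorial : ℝ) = (2*(p:ℝ)+1) * ((2*p).factorial : ℝ) := by
      rw [Nat.factorial_succ]; push_cast; ring
    rw [e1]
    have h1 : ((2*p).factorial : ℝ) ≠ 0 := Nat.cast_ne_zero.mpr (Nat.factorial_ne_zero _)
    have h2 : (2*(p:ℝ)+1) ≠ 0 := by positivity
    simp only [Finset.Icc_self, Nat.factorial_zero]
    rw [show Finset.Icc 1 0 = (∅ : Finset ℕ) from rfl, Finset.prod_empty]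
    field_simp
    rw [← pow_mul, mul_comm p 2, Nat.cast_one]
    ring
  | succ n ih =>
    intro hn
    have hn' : n ≤ p := by omega
    set k := p - (n+1) with hkdef
    have hk : k < p := by omega
    have hk1 : k + 1 = p - n := by omega
    have hrec := Jrec p k hk
    have hAr : Ar p k = 2 * (n:ℝ) := by
      rw [Ar, hkdef]
      rw [Nat.cast_sub hn]
      push_cast
      ring
    have hBr : Br p k = ((p:ℝ) - (n:ℝ)) * ((p:ℝ) + (n:ℝ) + 1) := by
      rw [Br, hkdef]
      rw [Nat.cast_sub hn]
      push_cast
      ring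
    rw [hAr, hBr, hk1] at hrec
    rw [ih hn'] at hrec
    have hprod : ∏ x ∈ Finset.Icc 1 (n+1),
        (2 * (x : ℝ) - 1) / ((2 * (p : ℝ) + 1) ^ 2 - 4 * (x : ℝ) ^ 2)
        = (∏ x ∈ Finset.Icc 1 n,
            (2 * (x : ℝ) - 1) / ((2 * (p : ℝ) + 1) ^ 2 - 4 * (x : ℝ) ^ 2)) *
          ((2 * ((n:ℝ)+1) - 1) / ((2 * (p : ℝ) + 1) ^ 2 - 4 * ((n:ℝ)+1) ^ 2)) := by
      rw [Finset.prod_Icc_succ_top (by omega)]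
      push_cast
      ring
    rw [hprod]
    have hfac : (((n+1).factorial : ℝ)) = ((n:ℝ)+1) * (n.factorial : ℝ) := by
      rw [Nat.factorial_succ]; push_cast; ring
    rw [hfac]
    -- denominators and coefficients
    have hne1 : (n.factorial : ℝ) ≠ 0 := Nat.cast_ne_zero.mpr (Nat.factorial_ne_zero _)
    have hne2 : (2*(p:ℝ)+1) ≠ 0 := by positivity
    have hnp1 : ((n:ℝ)+1) ≤ (p:ℝ) := by
      have := hn
      exact_mod_cast Nat.cast_le.mpr hn
    have hne3 : (2 * (p : ℝ) + 1) ^ 2 - 4 * ((n:ℝ)+1) ^ 2 > 0 := by nlinarith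
    have hne4 : ((n:ℝ)+1) ≠ 0 := by positivity
    -- coefficient of Jint p k in hrec:
    have hc1 : (2 * (-(3 + 2 * (2 * (n:ℝ)))) * (((p:ℝ) - (n:ℝ)) * ((p:ℝ) + (n:ℝ) + 1))
        + ((3 + 2 * (2 * (n:ℝ))) * (2 + 2 * (n:ℝ)) - 2 * (((p:ℝ) - (n:ℝ)) * ((p:ℝ) + (n:ℝ) + 1))))
        = -2 * ((n:ℝ)+1) * ((2 * (p : ℝ) + 1) ^ 2 - 4 * ((n:ℝ)+1) ^ 2) := by ring
    rw [hc1] at hrec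
    have hgoal : Jint p k =
      (4 + 4 * (2 * (n:ℝ))) * ((2^p * (p.factorial : ℝ))^2 *
        (2 ^ (n + 1) / (n.factorial : ℝ) * (1 / (2 * (p : ℝ) + 1)) *
          ∏ x ∈ Finset.Icc 1 n,
            (2 * (x : ℝ) - 1) / ((2 * (p : ℝ) + 1) ^ 2 - 4 * (x : ℝ) ^ 2)))
        / (2 * ((n:ℝ)+1) * ((2 * (p : ℝ) + 1) ^ 2 - 4 * ((n:ℝ)+1) ^ 2)) := by
      rw [eq_div_iff (by positivity)]
      nlinarith [hrec]
    rw [hgoal]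
    rw [pow_succ 2 (n+1)]
    have hsc : (4 + 4 * (2 * (n:ℝ))) * (2 ^ (n + 1) / (n.factorial : ℝ) * (1 / (2 * (p : ℝ) + 1)))
        / (2 * ((n:ℝ)+1) * ((2 * (p : ℝ) + 1) ^ 2 - 4 * ((n:ℝ)+1) ^ 2))
        = (2:ℝ) ^ (n + 1) * 2 / (((n:ℝ)+1) * (n.factorial : ℝ)) * (1 / (2 * (p : ℝ) + 1))
          * ((2 * ((n:ℝ)+1) - 1) / ((2 * (p : ℝ) + 1) ^ 2 - 4 * ((n:ℝ)+1) ^ 2)) := by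
      field_simp
      ring
    linear_combination ((2^p * (p.factorial : ℝ))^2 *
      ∏ x ∈ Finset.Icc 1 n,
        (2 * (x : ℝ) - 1) / ((2 * (p : ℝ) + 1) ^ 2 - 4 * (x : ℝ) ^ 2)) * hsc

end L2X

end AuxL2

open L2X in
/-- `L²`-norm of the `n`-th primitive of the Legendre polynomial `L_p`:
`‖ψ_{p,n}‖₀² = (2^{n+1}/n!) · 1/(2p+1) · ∏_{k=1}^n (2k−1)/((2p+1)² − 4k²)`. -/
theorem l2_norm_sq_legendre_primitive (p n : ℕ) (hnp : n ≤ p) :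
    nsq (psi p n) =
      2 ^ (n + 1) / (n.factorial : ℝ) * (1 / (2 * (p : ℝ) + 1)) *
        ∏ k ∈ Finset.Icc 1 n,
          (2 * (k : ℝ) - 1) / ((2 * (p : ℝ) + 1) ^ 2 - 4 * (k : ℝ) ^ 2) := by
  rw [nsq_eq p n hnp, Jval p n hnp]
  have hc : (2:ℝ)^p * (p.factorial : ℝ) ≠ 0 := by positivity
  rw [← mul_assoc, ← mul_pow, one_div, inv_mul_cancel₀ hc, one_pow, one_mul]
end

section
/- Let p, ν ∈ ℕ₀ with ν ≤ p, and let u ∈ H^{ν+1}(Ω). Suppose q_{p,ν} ∈ Λ_{p−ν}^{p+ν+1} satisfies q_{p,ν}(1) = 1, q_{p,ν}(−1) = 0 and q_{p,ν}^{(i)}(±1) = 0 for i = 1,…,ν. Then both traces of the ν-th derivative of the L² projection error satisfy |(u − π_p u)^{(ν)}(±1)| ≤ ‖q_{p,ν}‖₀ · |u|_{ν+1}. -/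
open MeasureTheory Polynomial

/-! ### Auxiliary lemmas -/

section Helpers

lemma Iom_def : Iom = Set.Icc (-1 : ℝ) 1 := rfl

lemma uniqueDiffOn_Iom : UniqueDiffOn ℝ Iom := uniqueDiffOn_Icc (by norm_num)

lemma setIntegral_Iom (f : ℝ → ℝ) : ∫ x in Iom, f x = ∫ x in (-1:ℝ)..1, f x := by
  rw [Iom_def, MeasureTheory.integral_Icc_eq_integral_Ioc,
    ← intervalIntegral.integral_of_le (by norm_num)]

lemma poly_iteratedDeriv (Q : Polynomial ℝ) (n : ℕ) :
    iteratedDeriv n (fun y => Q.eval y) = fun y => (derivative^[n] Q).eval y := by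
  induction n generalizing Q with
  | zero => simp
  | succ n ih =>
    rw [iteratedDeriv_succ']
    have h1 : deriv (fun y => Q.eval y) = fun y => Q.derivative.eval y :=
      funext fun y => Polynomial.deriv Q
    rw [h1, ih, Function.iterate_succ_apply]

lemma poly_iteratedDerivWithin (Q : Polynomial ℝ) (n : ℕ) :
    Set.EqOn (iteratedDerivWithin n (fun y => Q.eval y) Iom)
      (fun y => (derivative^[n] Q).eval y) Iom := by
  induction n with
  | zero => intro x hx; simp
  | succ n ih =>
    intro x hx
    rw [iteratedDerivWithin_succ, derivWithin_congr ih (ih hx),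
      (((derivative^[n] Q).hasDerivAt x).hasDerivWithinAt).derivWithin (uniqueDiffOn_Iom x hx),
      Function.iterate_succ_apply' derivative n Q]

lemma poly_contDiffOn (Q : Polynomial ℝ) (n : WithTop ℕ∞) :
    ContDiffOn ℝ n (fun y : ℝ => Q.eval y) Iom := by
  induction Q using Polynomial.induction_on with
  | C a => simpa using contDiffOn_const
  | add p q hp hq => simpa [eval_add] using hp.add hq
  | monomial k a _ =>
    simp only [eval_mul, eval_C, eval_pow, eval_X]
    exact contDiffOn_const.mul (contDiffOn_id.pow _)

/-- Integration by parts on `[-1,1]` with derivatives only on the interior. -/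
lemma ibp (f g f' g' : ℝ → ℝ)
    (hf : ContinuousOn f (Set.Icc (-1:ℝ) 1)) (hg : ContinuousOn g (Set.Icc (-1:ℝ) 1))
    (hf' : ∀ x ∈ Set.Ioo (-1:ℝ) 1, HasDerivAt f (f' x) x)
    (hg' : ∀ x ∈ Set.Ioo (-1:ℝ) 1, HasDerivAt g (g' x) x)
    (hcf' : ContinuousOn f' (Set.Icc (-1:ℝ) 1)) (hcg' : ContinuousOn g' (Set.Icc (-1:ℝ) 1)) :
    ∫ x in (-1:ℝ)..1, (f' x * g x + f x * g' x) = f 1 * g 1 - f (-1) * g (-1) := by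
  have huIcc : Set.uIcc (-1:ℝ) 1 = Set.Icc (-1:ℝ) 1 := Set.uIcc_of_le (by norm_num)
  apply intervalIntegral.integral_eq_sub_of_hasDerivAt_of_le (by norm_num)
    (hf.mul hg)
    (fun x hx => (hf' x hx).mul (hg' x hx))
  apply ContinuousOn.intervalIntegrable
  rw [huIcc]
  exact (hcf'.mul hg).add (hf.mul hcg')

set_option maxHeartbeats 1000000 in
/-- Cauchy–Schwarz for continuous functions on `[-1,1]`. -/
lemma cauchy_schwarz (f g : ℝ → ℝ) (hf : ContinuousOn f Iom) (hg : ContinuousOn g Iom) :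
    |∫ x in Iom, f x * g x| ≤
      Real.sqrt (∫ x in Iom, f x ^ 2) * Real.sqrt (∫ x in Iom, g x ^ 2) := by
  have hcpt : IsCompact Iom := isCompact_Icc
  have hif : IntegrableOn (fun x => f x ^ 2) Iom := (hf.pow 2).integrableOn_compact hcpt
  have hig : IntegrableOn (fun x => g x ^ 2) Iom := (hg.pow 2).integrableOn_compact hcpt
  have hifg : IntegrableOn (fun x => f x * g x) Iom := (hf.mul hg).integrableOn_compact hcpt
  set A := ∫ x in Iom, f x ^ 2 with hA
  set B := ∫ x in Iom, f x * g x with hB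
  set C := ∫ x in Iom, g x ^ 2 with hC
  have hA0 : 0 ≤ A := setIntegral_nonneg hcpt.measurableSet (fun x _ => sq_nonneg _)
  have hC0 : 0 ≤ C := setIntegral_nonneg hcpt.measurableSet (fun x _ => sq_nonneg _)
  have key : ∀ t : ℝ, 0 ≤ C * (t * t) + (2 * B) * t + A := by
    intro t
    have h1 : (0:ℝ) ≤ ∫ x in Iom, (t * g x + f x) ^ 2 :=
      setIntegral_nonneg hcpt.measurableSet (fun x _ => sq_nonneg _)
    have h2 : ∫ x in Iom, (t * g x + f x) ^ 2 = C * (t * t) + (2 * B) * t + A := by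
      have heq : ∀ x : ℝ, (t * g x + f x) ^ 2
          = (t*t) * g x ^ 2 + (2*t) * (f x * g x) + f x ^ 2 := by intro x; ring
      simp_rw [heq]
      have ha : IntegrableOn (fun x => (t*t) * g x ^ 2) Iom := hig.const_mul _
      have hb : IntegrableOn (fun x => (2*t) * (f x * g x)) Iom := hifg.const_mul _
      have hab : IntegrableOn (fun x => (t*t) * g x ^ 2 + (2*t) * (f x * g x)) Iom := ha.add hb
      rw [integral_add hab hif, integral_add ha hb, integral_const_mul, integral_const_mul]
      ring
    linarith
  have hd := discrim_le_zero key
  rw [discrim] at hd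
  have hBsq : B ^ 2 ≤ A * C := by nlinarith
  calc |B| = Real.sqrt (B ^ 2) := (Real.sqrt_sq_eq_abs B).symm
    _ ≤ Real.sqrt (A * C) := Real.sqrt_le_sqrt hBsq
    _ = Real.sqrt A * Real.sqrt C := Real.sqrt_mul hA0 C

/-- Stripping one power of `(X - a)` under differentiation. -/
lemma dvd_derivative_of_dvd {a : ℝ} {k : ℕ} {s : Polynomial ℝ}
    (h : (X - C a) ^ (k + 1) ∣ s) : (X - C a) ^ k ∣ derivative s := by
  obtain ⟨t, rfl⟩ := h
  rw [derivative_mul, derivative_pow]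
  refine dvd_add ?_ ?_
  · exact (((pow_dvd_pow (X - C a) (by omega : k ≤ k + 1 - 1)).mul_left _).mul_right _).mul_right _
  · exact (pow_dvd_pow (X - C a) (by omega : k ≤ k + 1)).mul_right _

lemma dvd_iterate_derivative_W (m k : ℕ) (hk : k ≤ m) (a : ℝ) (ha : a = 1 ∨ a = -1) :
    (X - C a) ^ (m - k) ∣ derivative^[k] (((X:Polynomial ℝ) ^ 2 - 1) ^ m) := by
  induction k with
  | zero =>
    simp only [Function.iterate_zero, id_eq]
    have hfact : ((X:Polynomial ℝ) ^ 2 - 1) = (X - C 1) * (X - C (-1)) := by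
      rw [C_neg, C_1]; ring
    rcases ha with rfl | rfl
    · calc (X - C (1:ℝ)) ^ (m - 0) ∣ (X - C 1) ^ m := pow_dvd_pow _ (by omega)
        _ ∣ _ := by rw [hfact, mul_pow]; exact Dvd.intro _ rfl
    · calc (X - C (-1:ℝ)) ^ (m - 0) ∣ (X - C (-1)) ^ m := pow_dvd_pow _ (by omega)
        _ ∣ _ := by rw [hfact, mul_pow]; exact Dvd.intro_left _ rfl
  | succ k ih =>
    rw [Function.iterate_succ_apply']
    have h1 : (X - C a) ^ (m - k - 1 + 1) ∣ derivative^[k] (((X:Polynomial ℝ) ^ 2 - 1) ^ m) := by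
      have : m - k - 1 + 1 ≤ m - k := by omega
      exact dvd_trans (pow_dvd_pow _ this) (ih (by omega))
    have := dvd_derivative_of_dvd h1
    rwa [show m - k - 1 = m - (k+1) by omega] at this

lemma W_eval_boundary (m k : ℕ) (hk : k < m) (a : ℝ) (ha : a = 1 ∨ a = -1) :
    (derivative^[k] (((X:Polynomial ℝ) ^ 2 - 1) ^ m)).eval a = 0 := by
  obtain ⟨t, ht⟩ := dvd_iterate_derivative_W m k (le_of_lt hk) a ha
  rw [ht, eval_mul, eval_pow, eval_sub, eval_X, eval_C, sub_self,
    zero_pow (by omega), zero_mul]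

/-- Integration by parts for polynomials on `[-1,1]`. -/
lemma poly_ibp (s t : Polynomial ℝ) :
    ∫ x in (-1:ℝ)..1, (s.derivative.eval x * t.eval x + s.eval x * t.derivative.eval x)
      = s.eval 1 * t.eval 1 - s.eval (-1) * t.eval (-1) := by
  apply intervalIntegral.integral_eq_sub_of_hasDerivAt
    (f := fun x => s.eval x * t.eval x)
  · exact fun x _ => (s.hasDerivAt x).mul (t.hasDerivAt x)
  · have hc : Continuous fun x : ℝ =>
        s.derivative.eval x * t.eval x + s.eval x * t.derivative.eval x :=
      (s.derivative.continuous.mul t.continuous).add (s.continuous.mul t.derivative.continuous)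
    exact hc.intervalIntegrable _ _

lemma W_orth (m : ℕ) (v : Polynomial ℝ) (hv : v.natDegree < m) :
    ∫ x in (-1:ℝ)..1, (derivative^[m] (((X:Polynomial ℝ) ^ 2 - 1) ^ m)).eval x * v.eval x = 0 := by
  set W : Polynomial ℝ := ((X:Polynomial ℝ) ^ 2 - 1) ^ m with hW
  have key : ∀ j, j ≤ m →
      ∫ x in (-1:ℝ)..1, (derivative^[m] W).eval x * v.eval x
        = (-1:ℝ)^j * ∫ x in (-1:ℝ)..1,
            (derivative^[m-j] W).eval x * (derivative^[j] v).eval x := by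
    intro j hj
    induction j with
    | zero => simp
    | succ j ih =>
      rw [ih (by omega)]
      have hibp := poly_ibp (derivative^[m-j-1] W) (derivative^[j] v)
      have hbd1 : (derivative^[m-j-1] W).eval 1 = 0 :=
        W_eval_boundary m _ (by omega) 1 (Or.inl rfl)
      have hbd2 : (derivative^[m-j-1] W).eval (-1) = 0 :=
        W_eval_boundary m _ (by omega) (-1) (Or.inr rfl)
      rw [hbd1, hbd2, zero_mul, zero_mul, sub_zero] at hibp
      have hsplit : ∫ x in (-1:ℝ)..1,
          ((derivative^[m-j-1] W).derivative.eval x * (derivative^[j] v).eval x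
            + (derivative^[m-j-1] W).eval x * (derivative^[j] v).derivative.eval x)
          = (∫ x in (-1:ℝ)..1,
              (derivative^[m-j-1] W).derivative.eval x * (derivative^[j] v).eval x)
            + ∫ x in (-1:ℝ)..1,
              (derivative^[m-j-1] W).eval x * (derivative^[j] v).derivative.eval x := by
        exact intervalIntegral.integral_add
          (((derivative^[m-j-1] W).derivative.continuous.mul
            (derivative^[j] v).continuous).intervalIntegrable _ _)
          (((derivative^[m-j-1] W).continuous.mul
            (derivative^[j] v).derivative.continuous).intervalIntegrable _ _)
      rw [hsplit] at hibp
      have e1 : (derivative^[m-j-1] W).derivative = derivative^[m-j] W := by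
        rw [show m - j = (m-j-1)+1 by omega]
        exact (Function.iterate_succ_apply' derivative (m-j-1) W).symm
      have e2 : (derivative^[j] v).derivative = derivative^[j+1] v :=
        (Function.iterate_succ_apply' derivative j v).symm
      rw [e1, e2] at hibp
      rw [show m - j - 1 = m - (j+1) by omega] at hibp
      have h3 : ∫ x in (-1:ℝ)..1, (derivative^[m-j] W).eval x * (derivative^[j] v).eval x
          = - ∫ x in (-1:ℝ)..1,
              (derivative^[m-(j+1)] W).eval x * (derivative^[j+1] v).eval x := by
        linarith
      rw [h3, pow_succ]
      ring
  have hfin := key m le_rfl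
  rw [Nat.sub_self] at hfin
  rw [hfin, iterate_derivative_eq_zero hv]
  simp

/-- Legendre polynomials are orthogonal to lower-degree polynomials. -/
lemma leg_orth (m : ℕ) (v : Polynomial ℝ) (hv : v.natDegree < m) :
    ∫ x in (-1:ℝ)..1, (leg m).eval x * v.eval x = 0 := by
  have hzero := W_orth m v hv
  simp only [leg, eval_smul, smul_eq_mul]
  have hre : ∀ x : ℝ, (1:ℝ) / (2 ^ m * m.factorial)
        * (derivative^[m] (((X:Polynomial ℝ) ^ 2 - 1) ^ m)).eval x * v.eval x
      = (1:ℝ) / (2 ^ m * m.factorial)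
        * ((derivative^[m] (((X:Polynomial ℝ) ^ 2 - 1) ^ m)).eval x * v.eval x) :=
    fun x => by ring
  simp_rw [hre, intervalIntegral.integral_const_mul, hzero, mul_zero]

lemma leg_natDegree_le (m : ℕ) : (leg m).natDegree ≤ m := by
  have h1 : ((X:Polynomial ℝ)^2 - 1).natDegree = 2 := by
    rw [← C_1, natDegree_X_pow_sub_C]
  have h2 : ((((X:Polynomial ℝ)^2 - 1))^m).natDegree ≤ 2*m := by
    calc ((((X:Polynomial ℝ)^2 - 1))^m).natDegree
        ≤ m * ((X:Polynomial ℝ)^2-1).natDegree := natDegree_pow_le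
      _ = 2*m := by rw [h1]; ring
  have h3 := natDegree_iterate_derivative ((((X:Polynomial ℝ)^2 - 1))^m) m
  calc (leg m).natDegree
      ≤ (derivative^[m] ((((X:Polynomial ℝ)^2 - 1))^m)).natDegree := natDegree_smul_le _ _
    _ ≤ m := by omega

lemma iterate_derivative_comp_neg (k : ℕ) (s : Polynomial ℝ) :
    derivative^[k] (s.comp (-X)) = (-1)^k * (derivative^[k] s).comp (-X) := by
  induction k generalizing s with
  | zero => simp
  | succ k ih =>
    rw [Function.iterate_succ_apply, Function.iterate_succ_apply]
    rw [derivative_comp]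
    simp only [derivative_neg, derivative_X]
    rw [show (-(1:Polynomial ℝ)) * (derivative s).comp (-X) = -((derivative s).comp (-X)) by ring,
      iterate_derivative_neg, ih (derivative s)]
    ring

/-- Master identity. -/
lemma master (p ν : ℕ) (hνp : ν ≤ p) (u : ℝ → ℝ) (hu : ContDiffOn ℝ (ν+1 : ℕ) u Iom)
    (Pq : Polynomial ℝ) (hPdeg : Pq.natDegree ≤ p)
    (horthP : ∀ v : Polynomial ℝ, v.natDegree ≤ p →
      ∫ x in Iom, (Pq.eval x - u x) * v.eval x = 0)
    (R : Polynomial ℝ) (hRdeg : R.natDegree ≤ p + ν + 1)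
    (hvan : ∀ i, 1 ≤ i → i ≤ ν →
      (derivative^[i] R).eval 1 = 0 ∧ (derivative^[i] R).eval (-1) = 0)
    (horthR : ∀ w : Polynomial ℝ, (w = 0 ∨ w.natDegree < p - ν) →
      ∫ x in (-1:ℝ)..1, R.eval x * w.eval x = 0) :
    R.eval 1 * iteratedDerivWithin ν (fun y => u y - Pq.eval y) Iom 1
      - R.eval (-1) * iteratedDerivWithin ν (fun y => u y - Pq.eval y) Iom (-1)
    = ∫ x in (-1:ℝ)..1, R.eval x * iteratedDerivWithin (ν+1) u Iom x := by
  set e : ℝ → ℝ := fun y => u y - Pq.eval y with he_def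
  have he : ContDiffOn ℝ (ν+1 : ℕ) e Iom := hu.sub (poly_contDiffOn Pq _)
  set E : ℕ → ℝ → ℝ := fun k => iteratedDerivWithin k e Iom with hE_def
  have hEcont : ∀ k, k ≤ ν + 1 → ContinuousOn (E k) Iom := fun k hk =>
    he.continuousOn_iteratedDerivWithin (by exact_mod_cast hk) uniqueDiffOn_Iom
  have hUcont : ContinuousOn (iteratedDerivWithin (ν+1) u Iom) Iom :=
    hu.continuousOn_iteratedDerivWithin le_rfl uniqueDiffOn_Iom
  have hE : ∀ k, k ≤ ν → ∀ x ∈ Set.Ioo (-1:ℝ) 1, HasDerivAt (E k) (E (k+1) x) x := by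
    intro k hk x hx
    have hxI : x ∈ Iom := Set.mem_Icc.mpr ⟨hx.1.le, hx.2.le⟩
    have hd : DifferentiableWithinAt ℝ (E k) Iom x :=
      (he.differentiableOn_iteratedDerivWithin
        (by exact_mod_cast Nat.lt_succ_of_le hk) uniqueDiffOn_Iom) x hxI
    have h2 : HasDerivAt (E k) (derivWithin (E k) Iom x) x :=
      hd.hasDerivWithinAt.hasDerivAt (Icc_mem_nhds hx.1 hx.2)
    rwa [show derivWithin (E k) Iom x = E (k+1) x from
      by simp only [hE_def, iteratedDerivWithin_succ]] at h2
  have hint : ∀ (g : Polynomial ℝ) (k : ℕ), k ≤ ν + 1 →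
      IntervalIntegrable (fun x => g.eval x * E k x) volume (-1) 1 := by
    intro g k hk
    apply ContinuousOn.intervalIntegrable
    rw [Set.uIcc_of_le (by norm_num : (-1:ℝ) ≤ 1), ← Iom_def]
    exact g.continuous.continuousOn.mul (hEcont k hk)
  have hibpE : ∀ (g : Polynomial ℝ) (k : ℕ), k ≤ ν →
      (∫ x in (-1:ℝ)..1, g.derivative.eval x * E k x)
        + ∫ x in (-1:ℝ)..1, g.eval x * E (k+1) x
      = g.eval 1 * E k 1 - g.eval (-1) * E k (-1) := by
    intro g k hk
    have h1 := ibp (fun x => g.eval x) (E k) (fun x => g.derivative.eval x) (E (k+1))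
      g.continuous.continuousOn (by rw [← Iom_def]; exact hEcont k (by omega))
      (fun x _ => g.hasDerivAt x) (hE k hk)
      g.derivative.continuous.continuousOn (by rw [← Iom_def]; exact hEcont (k+1) (by omega))
    rwa [intervalIntegral.integral_add (hint g.derivative k (by omega))
      (hint g (k+1) (by omega))] at h1
  have chain : ∀ m, m ≤ ν →
      ∫ x in (-1:ℝ)..1, R.derivative.eval x * E ν x
        = (-1:ℝ)^m * ∫ x in (-1:ℝ)..1, (derivative^[m+1] R).eval x * E (ν-m) x := by
    intro m
    induction m with
    | zero => intro _; simp
    | succ m ih =>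
      intro hm
      rw [ih (by omega)]
      have h1 := hibpE (derivative^[m+1] R) (ν-m-1) (by omega)
      have e3 : ν - m - 1 + 1 = ν - m := by omega
      rw [e3, show (derivative^[m+1] R).derivative = derivative^[m+2] R from
        (Function.iterate_succ_apply' derivative (m+1) R).symm] at h1
      have hb := hvan (m+1) (by omega) (by omega)
      rw [hb.1, hb.2, zero_mul, zero_mul, sub_zero] at h1
      have h2 : ∫ x in (-1:ℝ)..1, (derivative^[m+1] R).eval x * E (ν-m) x
          = - ∫ x in (-1:ℝ)..1, (derivative^[m+2] R).eval x * E (ν-m-1) x := by linarith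
      rw [h2, show ν - m - 1 = ν - (m+1) by omega, show m + 2 = (m+1)+1 by omega, pow_succ]
      ring
  have hlast : ∫ x in (-1:ℝ)..1, (derivative^[ν+1] R).eval x * E 0 x = 0 := by
    have hdeg : (derivative^[ν+1] R).natDegree ≤ p := by
      have := natDegree_iterate_derivative R (ν+1)
      omega
    have h0 := horthP (derivative^[ν+1] R) hdeg
    rw [setIntegral_Iom] at h0
    have heq : ∫ x in (-1:ℝ)..1, (derivative^[ν+1] R).eval x * E 0 x
        = - ∫ x in (-1:ℝ)..1, (Pq.eval x - u x) * (derivative^[ν+1] R).eval x := by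
      rw [← intervalIntegral.integral_neg]
      apply intervalIntegral.integral_congr
      intro x _
      simp only [hE_def, iteratedDerivWithin_zero, he_def]
      ring
    rw [heq, h0, neg_zero]
  have hchain := chain ν le_rfl
  rw [Nat.sub_self, hlast, mul_zero] at hchain
  have hdecomp : ∫ x in (-1:ℝ)..1, R.eval x * E (ν+1) x
      = ∫ x in (-1:ℝ)..1, R.eval x * iteratedDerivWithin (ν+1) u Iom x := by
    have hEq : Set.EqOn (fun x => R.eval x * E (ν+1) x)
        (fun x => R.eval x * iteratedDerivWithin (ν+1) u Iom x
          - R.eval x * (derivative^[ν+1] Pq).eval x) (Set.uIcc (-1:ℝ) 1) := by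
      intro x hx
      have hxI : x ∈ Iom := by
        rw [Iom_def, ← Set.uIcc_of_le (by norm_num : (-1:ℝ) ≤ 1)]; exact hx
      have h1 : E (ν+1) x = iteratedDerivWithin (ν+1) u Iom x
          - iteratedDerivWithin (ν+1) (fun y => Pq.eval y) Iom x :=
        iteratedDerivWithin_sub hxI uniqueDiffOn_Iom (hu x hxI) (poly_contDiffOn Pq _ x hxI)
      have h2 : iteratedDerivWithin (ν+1) (fun y => Pq.eval y) Iom x
          = (derivative^[ν+1] Pq).eval x := poly_iteratedDerivWithin Pq (ν+1) hxI
      show R.eval x * E (ν+1) x = _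
      rw [h1, h2]
      ring
    rw [intervalIntegral.integral_congr hEq]
    have hiU : IntervalIntegrable
        (fun x => R.eval x * iteratedDerivWithin (ν+1) u Iom x) volume (-1) 1 := by
      apply ContinuousOn.intervalIntegrable
      rw [Set.uIcc_of_le (by norm_num : (-1:ℝ) ≤ 1), ← Iom_def]
      exact R.continuous.continuousOn.mul hUcont
    have hiP : IntervalIntegrable
        (fun x => R.eval x * (derivative^[ν+1] Pq).eval x) volume (-1) 1 :=
      (R.continuous.mul (derivative^[ν+1] Pq).continuous).intervalIntegrable _ _
    rw [intervalIntegral.integral_sub hiU hiP]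
    have hw : (derivative^[ν+1] Pq = 0) ∨ (derivative^[ν+1] Pq).natDegree < p - ν := by
      by_cases hc : Pq.natDegree < ν + 1
      · exact Or.inl (iterate_derivative_eq_zero hc)
      · right
        have := natDegree_iterate_derivative Pq (ν+1)
        omega
    rw [horthR _ hw, sub_zero]
  have hmain := hibpE R ν le_rfl
  rw [hchain, zero_add, hdecomp] at hmain
  exact hmain.symm

lemma integral_reflect (f : ℝ → ℝ) : ∫ x in (-1:ℝ)..1, f (-x) = ∫ x in (-1:ℝ)..1, f x := by
  rw [intervalIntegral.integral_comp_neg]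
  norm_num

end Helpers

/-- For `ν ≤ p` and `u ∈ H^{ν+1}(Ω)`, with `q_{p,ν} ∈ Λ_{p−ν}^{p+ν+1}`
satisfying the endpoint conditions, both traces of the `ν`-th derivative of the `L²`
projection error satisfy `|(u − π_p u)^{(ν)}(±1)| ≤ ‖q_{p,ν}‖₀ · |u|_{ν+1}`. -/
theorem trace_deriv_projection_error_le (p ν : ℕ) (hνp : ν ≤ p) (u P q : ℝ → ℝ)
    (hu : MemH (ν + 1) u) (hP : IsL2Proj p u P) (hq : IsQ p ν q) :
    ∀ x ∈ ({1, -1} : Set ℝ),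
      |iteratedDerivWithin ν (fun y => u y - P y) Iom x| ≤
        Real.sqrt (nsq q) * Real.sqrt (semSq (ν + 1) u) := by
  obtain ⟨⟨Pq, hPdeg, hPeq⟩, horth⟩ := hP
  obtain ⟨⟨c, hc⟩, hq1, hqm1, hqd⟩ := hq
  have hefun : (fun y => u y - P y) = (fun y => u y - Pq.eval y) :=
    funext fun y => by rw [hPeq]
  set Qp : Polynomial ℝ := ∑ m ∈ Finset.Icc (p-ν) (p+ν+1), C (c m) * leg m with hQp
  have hqe : ∀ x, q x = Qp.eval x := fun x => by
    rw [hc x, hQp, eval_finset_sum]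
    exact Finset.sum_congr rfl fun m _ => by rw [eval_mul, eval_C]
  have hqfun : q = fun y => Qp.eval y := funext hqe
  have hQ1 : Qp.eval 1 = 1 := by rw [← hqe]; exact hq1
  have hQm1 : Qp.eval (-1) = 0 := by rw [← hqe]; exact hqm1
  have horthP : ∀ v : Polynomial ℝ, v.natDegree ≤ p →
      ∫ x in Iom, (Pq.eval x - u x) * v.eval x = 0 := by
    intro v hv
    have h := horth v hv
    simp only [hPeq] at h
    exact h
  have hQpdeg : Qp.natDegree ≤ p + ν + 1 := by
    apply natDegree_sum_le_of_forall_le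
    intro m hm
    exact (natDegree_C_mul_le _ _).trans ((leg_natDegree_le m).trans (Finset.mem_Icc.mp hm).2)
  have hvanQ : ∀ i, 1 ≤ i → i ≤ ν →
      (derivative^[i] Qp).eval 1 = 0 ∧ (derivative^[i] Qp).eval (-1) = 0 := by
    intro i h1 h2
    have h := hqd i h1 h2
    rw [hqfun, poly_iteratedDeriv] at h
    exact h
  have horthQ : ∀ w : Polynomial ℝ, (w = 0 ∨ w.natDegree < p - ν) →
      ∫ x in (-1:ℝ)..1, Qp.eval x * w.eval x = 0 := by
    rintro w (rfl | hw)
    · simp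
    · have hEq : Set.EqOn (fun x => Qp.eval x * w.eval x)
          (fun x => ∑ m ∈ Finset.Icc (p-ν) (p+ν+1), c m * ((leg m).eval x * w.eval x))
          (Set.uIcc (-1:ℝ) 1) := by
        intro x _
        show Qp.eval x * w.eval x = _
        rw [hQp, eval_finset_sum, Finset.sum_mul]
        exact Finset.sum_congr rfl fun m _ => by rw [eval_mul, eval_C]; ring
      rw [intervalIntegral.integral_congr hEq, intervalIntegral.integral_finset_sum]
      · apply Finset.sum_eq_zero
        intro m hm
        rw [intervalIntegral.integral_const_mul,
          leg_orth m w (lt_of_lt_of_le hw (Finset.mem_Icc.mp hm).1), mul_zero]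
      · intro m _
        exact (continuous_const.mul ((leg m).continuous.mul w.continuous)).intervalIntegrable _ _
  have hucd : ContDiffOn ℝ (ν+1 : ℕ) u Iom := hu
  have hUcont : ContinuousOn (iteratedDerivWithin (ν+1) u Iom) Iom :=
    hucd.continuousOn_iteratedDerivWithin le_rfl uniqueDiffOn_Iom
  rw [hefun, hqfun]
  intro x hx
  have hx' : x = 1 ∨ x = -1 := by simpa using hx
  rcases hx' with rfl | rfl
  · -- x = 1
    have hm := master p ν hνp u hucd Pq hPdeg horthP Qp hQpdeg hvanQ horthQ
    rw [hQ1, hQm1, one_mul, zero_mul, sub_zero] at hm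
    have hcs := cauchy_schwarz (fun y => Qp.eval y) (iteratedDerivWithin (ν+1) u Iom)
      Qp.continuous.continuousOn hUcont
    rw [setIntegral_Iom] at hcs
    rw [hm]
    simpa [nsq, semSq] using hcs
  · -- x = -1
    set Rp : Polynomial ℝ := Qp.comp (-X) with hRp
    have hRdeg : Rp.natDegree ≤ p + ν + 1 := by
      rw [hRp]
      have h := natDegree_comp_le (p := Qp) (q := -X)
      rw [natDegree_neg, natDegree_X, mul_one] at h
      exact h.trans hQpdeg
    have hvanR : ∀ i, 1 ≤ i → i ≤ ν →
        (derivative^[i] Rp).eval 1 = 0 ∧ (derivative^[i] Rp).eval (-1) = 0 := by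
      intro i h1 h2
      have hv := hvanQ i h1 h2
      refine ⟨?_, ?_⟩
      · rw [hRp, iterate_derivative_comp_neg]
        simp [eval_comp, hv.2]
      · rw [hRp, iterate_derivative_comp_neg]
        simp [eval_comp, hv.1]
    have horthR : ∀ w : Polynomial ℝ, (w = 0 ∨ w.natDegree < p - ν) →
        ∫ x in (-1:ℝ)..1, Rp.eval x * w.eval x = 0 := by
      rintro w (rfl | hw)
      · simp
      · have hEq : Set.EqOn (fun x => Rp.eval x * w.eval x)
            (fun x => (fun y => Qp.eval y * (w.comp (-X)).eval y) (-x)) (Set.uIcc (-1:ℝ) 1) := by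
          intro x _
          show Rp.eval x * w.eval x = Qp.eval (-x) * (w.comp (-X)).eval (-x)
          rw [hRp]
          simp [eval_comp]
        refine (intervalIntegral.integral_congr hEq).trans
          (((integral_reflect (fun y => Qp.eval y * (w.comp (-X)).eval y))).trans
            (horthQ (w.comp (-X)) (Or.inr ?_)))
        calc (w.comp (-X)).natDegree ≤ w.natDegree * (-X : Polynomial ℝ).natDegree :=
              natDegree_comp_le
          _ = w.natDegree := by rw [natDegree_neg, natDegree_X, mul_one]
          _ < p - ν := hw
    have hm := master p ν hνp u hucd Pq hPdeg horthP Rp hRdeg hvanR horthR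
    have hR1 : Rp.eval 1 = 0 := by
      rw [hRp, eval_comp]
      simpa using hQm1
    have hRm1 : Rp.eval (-1) = 1 := by
      rw [hRp, eval_comp]
      simpa using hQ1
    rw [hR1, hRm1, zero_mul, one_mul, zero_sub] at hm
    have hEm1 : iteratedDerivWithin ν (fun y => u y - Pq.eval y) Iom (-1)
        = - ∫ x in (-1:ℝ)..1, Rp.eval x * iteratedDerivWithin (ν+1) u Iom x := by linarith
    rw [hEm1, abs_neg]
    have hcs := cauchy_schwarz (fun y => Rp.eval y) (iteratedDerivWithin (ν+1) u Iom)
      Rp.continuous.continuousOn hUcont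
    rw [setIntegral_Iom] at hcs
    have hrefl : ∫ x in Iom, Rp.eval x ^ 2 = ∫ x in Iom, Qp.eval x ^ 2 := by
      rw [setIntegral_Iom, setIntegral_Iom]
      have hEq : Set.EqOn (fun x => Rp.eval x ^ 2)
          (fun x => (fun y => Qp.eval y ^ 2) (-x)) (Set.uIcc (-1:ℝ) 1) := by
        intro x _
        show Rp.eval x ^ 2 = Qp.eval (-x) ^ 2
        rw [hRp]
        simp [eval_comp]
      exact (intervalIntegral.integral_congr hEq).trans
        (integral_reflect (fun y => Qp.eval y ^ 2))
    rw [hrefl] at hcs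
    simpa [nsq, semSq] using hcs
end

section
/- Let ν ≥ 0 and p ≥ ν+1. Suppose q_{p,ν} ∈ Λ_{p−ν}^{p+ν+1} satisfies q_{p,ν}(1) = 1, q_{p,ν}(−1) = 0 and q_{p,ν}^{(i)}(±1) = 0 for i = 1,…,ν. Define q_{p,ν+1} := q_{p,ν} + α_{p,ν+1} ψ_{p,ν+1} + β_{p,ν+1} ψ_{p+1,ν+1} with α_{p,ν+1} = −(q_{p,ν}^{(ν+1)}(1) + (−1)^p q_{p,ν}^{(ν+1)}(−1))/2 and β_{p,ν+1} = −(q_{p,ν}^{(ν+1)}(1) − (−1)^p q_{p,ν}^{(ν+1)}(−1))/2. Then q_{p,ν+1} ∈ Λ_{p−ν−1}^{p+ν+2}, q_{p,ν+1}(1) = 1, q_{p,ν+1}(−1) = 0, and q_{p,ν+1}^{(i)}(±1) = 0 for i = 1,…,ν+1. -/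
open MeasureTheory Polynomial

noncomputable section AuxLemmas

lemma iterD_add (n : ℕ) (p q : ℝ[X]) :
    derivative^[n] (p + q) = derivative^[n] p + derivative^[n] q := by
  induction n generalizing p q with
  | zero => simp
  | succ n ih => simp [Function.iterate_succ_apply, derivative_add, ih]

lemma iterD_sub (n : ℕ) (p q : ℝ[X]) :
    derivative^[n] (p - q) = derivative^[n] p - derivative^[n] q := by
  induction n generalizing p q with
  | zero => simp
  | succ n ih => simp [Function.iterate_succ_apply, derivative_sub, ih]

lemma iterD_deriv (n : ℕ) (p : ℝ[X]) :
    derivative^[n] (derivative p) = derivative^[n + 1] p :=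
  (Function.iterate_succ_apply derivative n p).symm

lemma iterD_X_mul (n : ℕ) (q : ℝ[X]) :
    derivative^[n + 1] (X * q) =
      X * derivative^[n + 1] q + ((n : ℝ[X]) + 1) * derivative^[n] q := by
  induction n generalizing q with
  | zero => simp [derivative_mul]; ring
  | succ n ih =>
      have h1 : derivative^[n + 2] (X * q) = derivative^[n + 1] (derivative (X * q)) := by
        rw [Function.iterate_succ_apply]
      rw [h1]
      have h2 : derivative (X * q) = X * derivative q + q := by
        simp [derivative_mul]; ring
      rw [h2, iterD_add, ih (derivative q)]
      rw [iterD_deriv, iterD_deriv]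
      push_cast
      ring

lemma iterD_sq_mul (n : ℕ) (q : ℝ[X]) :
    derivative^[n + 1] ((X ^ 2 - 1) * q) =
      (X ^ 2 - 1) * derivative^[n + 1] q
        + 2 * ((n : ℝ[X]) + 1) * X * derivative^[n] q
        + ((n : ℝ[X]) + 1) * (n : ℝ[X]) * derivative^[n - 1] q := by
  cases n with
  | zero =>
      have key : ((X:ℝ[X]) ^ 2 - 1) * q = X * (X * q) - q := by ring
      rw [key, iterD_sub, iterD_X_mul 0]
      rw [iterD_X_mul 0 q]
      simp
      ring
  | succ n =>
      have key : ((X:ℝ[X]) ^ 2 - 1) * q = X * (X * q) - q := by ring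
      rw [key, iterD_sub, iterD_X_mul (n+1), iterD_X_mul (n+1) q, iterD_X_mul n q]
      push_cast
      ring

/-- `uu k = (X²-1)^k`. -/
def uu (k : ℕ) : ℝ[X] := ((X : ℝ[X]) ^ 2 - 1) ^ k

lemma deriv_uu (k : ℕ) :
    derivative (uu (k + 1)) = 2 * (((k + 1 : ℕ)) : ℝ[X]) * (X * uu k) := by
  unfold uu
  rw [derivative_pow]
  simp [derivative_X_pow, map_ofNat]
  push_cast
  ring

lemma sq_deriv_uu (k : ℕ) :
    (X ^ 2 - 1) * derivative (uu k) = 2 * ((k : ℕ) : ℝ[X]) * (X * uu k) := by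
  cases k with
  | zero => simp [uu]
  | succ k =>
      rw [deriv_uu]
      unfold uu
      rw [pow_succ]
      push_cast
      ring

-- the claim: (X²-1) D^{m+2} u_{m+1} = (m+1)(m+2) D^m u_{m+1}
lemma claimC (m : ℕ) :
    (X ^ 2 - 1) * derivative^[m + 2] (uu (m + 1)) =
      ((m : ℝ[X]) + 1) * ((m : ℝ[X]) + 2) * derivative^[m] (uu (m + 1)) := by
  cases m with
  | zero =>
      show ((X:ℝ[X]) ^ 2 - 1) * derivative (derivative (derivative^[0] (uu 1))) = _
      simp only [Function.iterate_zero, id_eq, uu, pow_one]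
      simp [derivative_X_pow, map_ofNat]
      ring
  | succ k =>
      have h := congrArg (fun p => derivative^[k + 2] p) (sq_deriv_uu (k + 2))
      rw [iterD_sq_mul (k + 1) (derivative (uu (k + 2)))] at h
      rw [iterD_deriv, iterD_deriv, iterD_deriv] at h
      have hc : (2 * (((k + 2 : ℕ)) : ℝ[X]) * (X * uu (k + 2)))
          = ((2 * (k + 2) : ℕ) : ℝ[X]) * (X * uu (k + 2)) := by
        push_cast; ring
      rw [hc, iterate_derivative_natCast_mul, iterD_X_mul (k + 1)] at h
      push_cast
      push_cast at h
      linear_combination h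

lemma iterD_deriv' (n : ℕ) (p : ℝ[X]) :
    derivative (derivative^[n] p) = derivative^[n + 1] p :=
  (Function.iterate_succ_apply' derivative n p).symm

def cc (n : ℕ) : ℝ := (1 : ℝ) / (2 ^ n * n.factorial)

lemma leg_eq (n : ℕ) : leg n = C (cc n) * derivative^[n] (uu n) := by
  rw [leg, smul_eq_C_mul]; rfl

lemma claimC' (n : ℕ) :
    (X ^ 2 - 1) * derivative^[n + 1] (uu n) =
      (n : ℝ[X]) * ((n : ℝ[X]) + 1) * derivative^[n - 1] (uu n) := by
  cases n with
  | zero => simp [uu]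
  | succ m =>
      have := claimC m
      push_cast
      push_cast at this
      linear_combination this

lemma hcc (n : ℕ) : (C (cc (n + 1)) : ℝ[X]) * ((2 * (n + 1) : ℕ) : ℝ[X]) = C (cc n) := by
  rw [← C_eq_natCast, ← C_mul]
  congr 1
  unfold cc
  push_cast
  have h2 : ((n:ℝ) + 1) ≠ 0 := by positivity
  field_simp [Nat.factorial_succ]
  ring_nf
  rw [add_comm 1 n, Nat.factorial_succ]
  push_cast
  ring

-- e4 : D^{n+2} u_{n+1} expansion
lemma e4 (n : ℕ) :
    derivative^[n + 2] (uu (n + 1)) =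
      ((2 * (n + 1) : ℕ) : ℝ[X]) *
        (X * derivative^[n + 1] (uu n) + ((n : ℝ[X]) + 1) * derivative^[n] (uu n)) := by
  have h1 : derivative^[n + 2] (uu (n + 1)) = derivative^[n + 1] (derivative (uu (n + 1))) := by
    rw [iterD_deriv]
  rw [h1, deriv_uu]
  have h2 : (2 : ℝ[X]) * (((n + 1 : ℕ)) : ℝ[X]) * (X * uu n)
      = ((2 * (n + 1) : ℕ) : ℝ[X]) * (X * uu n) := by push_cast; ring
  rw [h2, iterate_derivative_natCast_mul, iterD_X_mul n]

-- e5 : D^{n+1} u_{n+1} expansion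
lemma e5 (n : ℕ) :
    derivative^[n + 1] (uu (n + 1)) =
      (X ^ 2 - 1) * derivative^[n + 1] (uu n)
        + 2 * ((n : ℝ[X]) + 1) * X * derivative^[n] (uu n)
        + ((n : ℝ[X]) + 1) * (n : ℝ[X]) * derivative^[n - 1] (uu n) := by
  have h : uu (n + 1) = (X ^ 2 - 1) * uu n := by rw [uu, uu, pow_succ]; ring
  rw [h, iterD_sq_mul n]

lemma alpha_id (n : ℕ) :
    derivative (leg (n + 1)) = X * derivative (leg n) + ((n : ℝ[X]) + 1) * leg n := by
  have hc := hcc n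
  rw [leg_eq, leg_eq, derivative_C_mul, derivative_C_mul, iterD_deriv', iterD_deriv', e4]
  push_cast
  push_cast at hc
  linear_combination (X * derivative^[n+1] (uu n) + ((n:ℝ[X]) + 1) * derivative^[n] (uu n)) * hc

lemma beta_id (n : ℕ) :
    X * derivative (leg (n + 1)) - derivative (leg n) = ((n : ℝ[X]) + 1) * leg (n + 1) := by
  have hc := hcc n
  have hcl := claimC' n
  rw [leg_eq, leg_eq, derivative_C_mul, derivative_C_mul, iterD_deriv', iterD_deriv', e4,
    e5]
  push_cast
  push_cast at hc
  linear_combination (derivative^[n+1] (uu n)) * hc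
    + ((n:ℝ[X]) + 1) * C (cc (n + 1)) * hcl

lemma main_id (n : ℕ) :
    derivative (leg (n + 2)) =
      derivative (leg n) + (2 * (n : ℝ[X]) + 3) * leg (n + 1) := by
  have ha := alpha_id (n + 1)
  have hb := beta_id n
  push_cast at ha
  linear_combination ha + hb

lemma eval_iter_factor (a : ℝ) : ∀ (n : ℕ) (r : ℝ[X]),
    (derivative^[n] ((X - C a) ^ n * r)).eval a = n.factorial * r.eval a := by
  intro n
  induction n with
  | zero => simp
  | succ n ih =>
      intro r
      have h0 : derivative^[n + 1] ((X - C a) ^ (n + 1) * r)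
          = derivative^[n] (derivative ((X - C a) ^ (n + 1) * r)) := by
        rw [iterD_deriv]
      have h1 : derivative ((X - C a) ^ (n + 1) * r)
          = ((n + 1 : ℕ) : ℝ[X]) * ((X - C a) ^ n * r)
            + (X - C a) ^ n * ((X - C a) * derivative r) := by
        rw [derivative_mul, derivative_pow]
        simp
        ring
      rw [h0, h1, iterD_add, iterate_derivative_natCast_mul]
      simp only [eval_add, eval_mul, eval_natCast]
      rw [ih ((X - C a) * derivative r), ih r]
      simp [Nat.factorial_succ]
      ring

lemma uu_factor1 (n : ℕ) : uu n = (X - C 1) ^ n * ((X + C 1) ^ n) := by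
  rw [uu, ← mul_pow]
  congr 1
  simp
  ring

lemma uu_factor2 (n : ℕ) : uu n = (X - C (-1)) ^ n * ((X - C 1) ^ n) := by
  rw [uu, ← mul_pow]
  congr 1
  simp
  ring

lemma leg_eval_one (n : ℕ) : (leg n).eval 1 = 1 := by
  rw [leg_eq, eval_mul, eval_C, uu_factor1, eval_iter_factor]
  simp [cc]
  have h1 : ((n.factorial : ℝ)) ≠ 0 := by positivity
  have h2 : ((2:ℝ) ^ n) ≠ 0 := by positivity
  field_simp
  norm_num
lemma leg_eval_neg_one (n : ℕ) : (leg n).eval (-1) = (-1) ^ n := by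
  rw [leg_eq, eval_mul, eval_C, uu_factor2, eval_iter_factor]
  simp [cc]
  have h1 : ((n.factorial : ℝ)) ≠ 0 := by positivity
  have h2 : ((2:ℝ) ^ n) ≠ 0 := by positivity
  field_simp
  rw [show (-1 - 1 : ℝ) = (-1) * 2 by ring, mul_pow]
  ring

/-- Antiderivative of `leg (k+1)` vanishing at `±1`. -/
def QQ (k : ℕ) : ℝ[X] := ((2 * (k : ℝ) + 3)⁻¹) • (leg (k + 2) - leg k)

lemma cast_23 (k : ℕ) : (2 * (k : ℝ[X]) + 3) = C (2 * (k : ℝ) + 3) := by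
  simp [map_add, map_mul, map_ofNat, map_natCast]

lemma pos23 (k : ℕ) : (2 * (k : ℝ) + 3) ≠ 0 := by positivity

lemma deriv_QQ (k : ℕ) : derivative (QQ k) = leg (k + 1) := by
  rw [QQ, smul_eq_C_mul, derivative_C_mul, derivative_sub, main_id, cast_23]
  have h : C ((2 * (k:ℝ) + 3)⁻¹) * C (2 * (k:ℝ) + 3) = 1 := by
    rw [← C_mul, inv_mul_cancel₀ (pos23 k)]; simp
  linear_combination leg (k+1) * h

lemma QQ_eval_one (k : ℕ) : (QQ k).eval 1 = 0 := by
  simp [QQ, leg_eval_one]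

lemma QQ_eval_neg_one (k : ℕ) : (QQ k).eval (-1) = 0 := by
  simp [QQ, leg_eval_neg_one, pow_succ]

lemma QQ_mem_span (k : ℕ) : QQ k ∈ Submodule.span ℝ (leg '' Set.Icc k (k + 2)) := by
  apply Submodule.smul_mem
  apply Submodule.sub_mem
  · exact Submodule.subset_span ⟨k + 2, by simp, rfl⟩
  · exact Submodule.subset_span ⟨k, by simp, rfl⟩

lemma antider (a b : ℕ) (ha : 1 ≤ a) (S : ℝ[X])
    (hS : S ∈ Submodule.span ℝ (leg '' Set.Icc a b)) :
    ∃ A : ℝ[X], derivative A = S ∧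
      A ∈ Submodule.span ℝ (leg '' Set.Icc (a - 1) (b + 1)) ∧
      A.eval 1 = 0 ∧ A.eval (-1) = 0 := by
  induction hS using Submodule.span_induction with
  | mem x hx =>
      obtain ⟨m, hm, rfl⟩ := hx
      obtain ⟨hm1, hm2⟩ := hm
      have hm0 : 1 ≤ m := le_trans ha hm1
      obtain ⟨k, rfl⟩ : ∃ k, m = k + 1 := ⟨m - 1, (Nat.succ_pred_eq_of_pos hm0).symm⟩
      refine ⟨QQ k, deriv_QQ k, ?_, QQ_eval_one k, QQ_eval_neg_one k⟩
      refine Submodule.span_mono (Set.image_mono ?_) (QQ_mem_span k)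
      intro j hj
      obtain ⟨hj1, hj2⟩ := hj
      exact ⟨le_trans (by omega) hj1, by omega⟩
  | zero => exact ⟨0, by simp, Submodule.zero_mem _, by simp, by simp⟩
  | add x y hx hy ihx ihy =>
      obtain ⟨A1, h1, h2, h3, h4⟩ := ihx
      obtain ⟨A2, g1, g2, g3, g4⟩ := ihy
      exact ⟨A1 + A2, by simp [h1, g1], Submodule.add_mem _ h2 g2, by simp [h3, g3],
        by simp [h4, g4]⟩
  | smul r x hx ihx =>
      obtain ⟨A, h1, h2, h3, h4⟩ := ihx
      exact ⟨r • A, by simp [h1], Submodule.smul_mem _ r h2, by simp [h3], by simp [h4]⟩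

/-- FTC for polynomials. -/
lemma poly_ftc (A : ℝ[X]) (a x : ℝ) :
    ∫ t in a..x, (derivative A).eval t = A.eval x - A.eval a := by
  have h : ∀ t ∈ Set.uIcc a x, HasDerivAt (fun y => A.eval y) ((derivative A).eval t) t :=
    fun t _ => A.hasDerivAt t
  rw [intervalIntegral.integral_eq_sub_of_hasDerivAt h
    ((Polynomial.continuous (derivative A)).intervalIntegrable _ _)]

/-- iterated derivatives of polynomial evaluation maps. -/
lemma iteratedDeriv_polyeval (k : ℕ) (P : ℝ[X]) :
    iteratedDeriv k (fun x => P.eval x) = fun x => (derivative^[k] P).eval x := by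
  induction k generalizing P with
  | zero => simp
  | succ k ih =>
      rw [iteratedDeriv_succ', Function.iterate_succ_apply]
      have hd : deriv (fun x => P.eval x) = fun x => (derivative P).eval x :=
        funext fun x => P.deriv
      rw [hd, ih (derivative P)]

/-- The master lemma on primitives of Legendre polynomials. -/
lemma psi_poly (i : ℕ) : ∀ n : ℕ, n ≤ i → ∃ P : ℝ[X],
    (∀ x, psi i n x = P.eval x) ∧
    P ∈ Submodule.span ℝ (leg '' Set.Icc (i - n) (i + n)) ∧
    derivative^[n] P = leg i ∧
    ∀ k : ℕ, k < n → (derivative^[k] P).eval 1 = 0 ∧ (derivative^[k] P).eval (-1) = 0 := by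
  intro n
  induction n with
  | zero =>
      intro _
      refine ⟨leg i, fun x => rfl, Submodule.subset_span ⟨i, by simp, rfl⟩, rfl, fun k hk => absurd hk (by omega)⟩
  | succ n ih =>
      intro hn
      obtain ⟨P, hPeval, hPspan, hPder, hPvals⟩ := ih (by omega)
      have h1 : 1 ≤ i - n := by omega
      obtain ⟨A, hA1, hA2, hA3, hA4⟩ := antider (i - n) (i + n) h1 P hPspan
      refine ⟨A, ?_, ?_, ?_, ?_⟩
      · intro x
        show (∫ t in (-1:ℝ)..x, psi i n t) = A.eval x
        have : (∫ t in (-1:ℝ)..x, psi i n t) = ∫ t in (-1:ℝ)..x, (derivative A).eval t := by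
          congr 1
          funext t
          rw [hPeval t, hA1]
        rw [this, poly_ftc, hA4, sub_zero]
      · have hset : Set.Icc (i - n - 1) (i + n + 1) = Set.Icc (i - (n+1)) (i + (n+1)) := by
          congr 1 <;> omega
        rw [← hset]; exact hA2
      · rw [Function.iterate_succ_apply, hA1, hPder]
      · intro k hk
        cases k with
        | zero => exact ⟨hA3, hA4⟩
        | succ k =>
            rw [Function.iterate_succ_apply, hA1]
            exact hPvals k (by omega)

lemma span_to_coeff (a b : ℕ) (P : ℝ[X])
    (h : P ∈ Submodule.span ℝ (leg '' Set.Icc a b)) :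
    ∃ c : ℕ → ℝ, ∀ x, P.eval x = ∑ m ∈ Finset.Icc a b, c m * (leg m).eval x := by
  have h2 : Set.Icc a b = ↑(Finset.Icc a b) := by simp
  rw [h2] at h
  have h3 : leg '' ↑(Finset.Icc a b) = Set.range (fun m : (Finset.Icc a b) => leg ↑m) := by
    rw [show (fun m : (Finset.Icc a b) => leg ↑m) = leg ∘ (Subtype.val) from rfl,
      Set.range_comp, Subtype.range_coe_subtype]
    rfl
  rw [h3, Submodule.mem_span_range_iff_exists_fun] at h
  obtain ⟨c, hc⟩ := h
  refine ⟨fun m => if hm : m ∈ Finset.Icc a b then c ⟨m, hm⟩ else 0, fun x => ?_⟩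
  rw [← hc]
  rw [← Finset.sum_coe_sort (Finset.Icc a b)
    (fun m => (if hm : m ∈ Finset.Icc a b then c ⟨m, hm⟩ else 0) * eval x (leg m))]
  rw [eval_finset_sum]
  apply Finset.sum_congr rfl
  intro m _
  simp [dif_pos m.2, smul_eq_mul]

lemma coeff_to_span (a b : ℕ) (c : ℕ → ℝ) :
    (∑ m ∈ Finset.Icc a b, C (c m) * leg m) ∈ Submodule.span ℝ (leg '' Set.Icc a b) := by
  apply Submodule.sum_mem
  intro m hm
  rw [← smul_eq_C_mul]
  exact Submodule.smul_mem _ _ (Submodule.subset_span ⟨m, by simpa using hm, rfl⟩)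


end AuxLemmas

/-- If `q_{p,ν} ∈ Λ_{p−ν}^{p+ν+1}` satisfies the endpoint conditions and
`p ≥ ν + 1`, then `q_{p,ν+1} := q_{p,ν} + α_{p,ν+1} ψ_{p,ν+1} + β_{p,ν+1} ψ_{p+1,ν+1}` with the
stated coefficients lies in `Λ_{p−ν−1}^{p+ν+2}` and satisfies the endpoint conditions of
order `ν+1`. -/
theorem q_recursive_step (p ν : ℕ) (hp : ν + 1 ≤ p) (q : ℝ → ℝ) (hq : IsQ p ν q) :
    IsQ p (ν + 1) (fun x =>
      q x
        + (-(iteratedDeriv (ν + 1) q 1 + (-1 : ℝ) ^ p * iteratedDeriv (ν + 1) q (-1)) / 2) *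
            psi p (ν + 1) x
        + (-(iteratedDeriv (ν + 1) q 1 - (-1 : ℝ) ^ p * iteratedDeriv (ν + 1) q (-1)) / 2) *
            psi (p + 1) (ν + 1) x) := by
  obtain ⟨⟨c, hcq⟩, hq1, hqm1, hqder⟩ := hq
  -- the polynomial representing q
  set Pq : ℝ[X] := ∑ m ∈ Finset.Icc (p - ν) (p + ν + 1), C (c m) * leg m with hPq
  have hq_eval : ∀ x, q x = Pq.eval x := by
    intro x
    rw [hcq x, hPq, eval_finset_sum]
    simp
  have hq_fun : q = fun x => Pq.eval x := funext hq_eval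
  have hPq_span : Pq ∈ Submodule.span ℝ (leg '' Set.Icc (p - ν) (p + ν + 1)) :=
    coeff_to_span _ _ c
  -- polynomials for the psi's
  obtain ⟨P1, hP1e, hP1s, hP1d, hP1v⟩ := psi_poly p (ν + 1) hp
  obtain ⟨P2, hP2e, hP2s, hP2d, hP2v⟩ := psi_poly (p + 1) (ν + 1) (by omega)
  set α : ℝ := -(iteratedDeriv (ν + 1) q 1 + (-1 : ℝ) ^ p * iteratedDeriv (ν + 1) q (-1)) / 2
    with hα
  set β : ℝ := -(iteratedDeriv (ν + 1) q 1 - (-1 : ℝ) ^ p * iteratedDeriv (ν + 1) q (-1)) / 2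
    with hβ
  set F : ℝ[X] := Pq + C α * P1 + C β * P2 with hF
  have hf_eval : ∀ x, q x + α * psi p (ν + 1) x + β * psi (p + 1) (ν + 1) x = F.eval x := by
    intro x
    rw [hF, hq_eval x, hP1e x, hP2e x]
    simp
  -- iterated derivatives of F
  have hFk : ∀ k : ℕ,
      derivative^[k] F = derivative^[k] Pq + C α * derivative^[k] P1 + C β * derivative^[k] P2 := by
    intro k
    rw [hF, iterD_add, iterD_add, iterate_derivative_C_mul, iterate_derivative_C_mul]
  -- iterated derivatives of q in terms of Pq
  have hqk : ∀ k : ℕ, iteratedDeriv k q = fun x => (derivative^[k] Pq).eval x := by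
    intro k
    rw [hq_fun, iteratedDeriv_polyeval]
  -- iterated derivatives of f
  have hfun : (fun x => q x + α * psi p (ν + 1) x + β * psi (p + 1) (ν + 1) x)
      = fun x => F.eval x := funext hf_eval
  have hfk : ∀ k : ℕ, iteratedDeriv k (fun x =>
        q x + α * psi p (ν + 1) x + β * psi (p + 1) (ν + 1) x)
      = fun x => (derivative^[k] F).eval x := by
    intro k
    rw [hfun, iteratedDeriv_polyeval]
  refine ⟨?_, ?_, ?_, ?_⟩
  · -- span
    have hFspan : F ∈ Submodule.span ℝ (leg '' Set.Icc (p - (ν + 1)) (p + (ν + 1) + 1)) := by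
      apply Submodule.add_mem
      apply Submodule.add_mem
      · refine Submodule.span_mono (Set.image_mono ?_) hPq_span
        intro j hj
        obtain ⟨hj1, hj2⟩ := hj
        exact ⟨by omega, by omega⟩
      · rw [← smul_eq_C_mul]
        refine Submodule.smul_mem _ _ (Submodule.span_mono (Set.image_mono ?_) hP1s)
        intro j hj
        obtain ⟨hj1, hj2⟩ := hj
        exact ⟨by omega, by omega⟩
      · rw [← smul_eq_C_mul]
        refine Submodule.smul_mem _ _ (Submodule.span_mono (Set.image_mono ?_) hP2s)
        intro j hj
        obtain ⟨hj1, hj2⟩ := hj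
        exact ⟨by omega, by omega⟩
    obtain ⟨d, hd⟩ := span_to_coeff _ _ F hFspan
    exact ⟨d, fun x => (hf_eval x).trans (hd x)⟩
  · -- value at 1
    show q 1 + α * psi p (ν + 1) 1 + β * psi (p + 1) (ν + 1) 1 = 1
    rw [hf_eval 1, hF]
    simp only [eval_add, eval_mul, eval_C]
    have e1 : eval 1 P1 = 0 := by simpa using (hP1v 0 (by omega)).1
    have e2 : eval 1 P2 = 0 := by simpa using (hP2v 0 (by omega)).1
    rw [e1, e2, ← hq_eval 1, hq1]
    ring
  · -- value at -1
    show q (-1) + α * psi p (ν + 1) (-1) + β * psi (p + 1) (ν + 1) (-1) = 0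
    rw [hf_eval (-1), hF]
    simp only [eval_add, eval_mul, eval_C]
    have e1 : eval (-1) P1 = 0 := by simpa using (hP1v 0 (by omega)).2
    have e2 : eval (-1) P2 = 0 := by simpa using (hP2v 0 (by omega)).2
    rw [e1, e2, ← hq_eval (-1), hqm1]
    ring
  · -- derivatives
    intro k hk1 hk2
    have heval1 : iteratedDeriv k (fun x =>
          q x + α * psi p (ν + 1) x + β * psi (p + 1) (ν + 1) x) 1
        = (derivative^[k] F).eval 1 := by rw [hfk k]
    have heval2 : iteratedDeriv k (fun x =>
          q x + α * psi p (ν + 1) x + β * psi (p + 1) (ν + 1) x) (-1)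
        = (derivative^[k] F).eval (-1) := by rw [hfk k]
    rw [heval1, heval2, hFk k]
    simp only [eval_add, eval_mul, eval_C]
    rcases lt_or_eq_of_le hk2 with hlt | heq
    · -- k ≤ ν
      have hqz := hqder k hk1 (by omega)
      have hq1' : (derivative^[k] Pq).eval 1 = 0 := by
        have := hqz.1; rw [hqk k] at this; exact this
      have hq2' : (derivative^[k] Pq).eval (-1) = 0 := by
        have := hqz.2; rw [hqk k] at this; exact this
      rw [hq1', hq2', (hP1v k hlt).1, (hP1v k hlt).2, (hP2v k hlt).1, (hP2v k hlt).2]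
      norm_num
    · -- k = ν + 1
      subst heq
      rw [hP1d, hP2d, leg_eval_one, leg_eval_one, leg_eval_neg_one, leg_eval_neg_one]
      have hd1 : (derivative^[ν + 1] Pq).eval 1 = iteratedDeriv (ν + 1) q 1 := by
        rw [hqk (ν + 1)]
      have hd2 : (derivative^[ν + 1] Pq).eval (-1) = iteratedDeriv (ν + 1) q (-1) := by
        rw [hqk (ν + 1)]
      rw [hd1, hd2, hα, hβ]
      have hsq : ((-1 : ℝ) ^ p) * ((-1 : ℝ) ^ p) = 1 := by
        rw [← mul_pow]; norm_num
      constructor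
      · ring
      · rw [pow_succ]
        linear_combination (-(iteratedDeriv (ν + 1) q (-1))) * hsq
end
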